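/- Let ω be the modulus of continuity with ω(ξ) = ξ - ξ^r on [0,δ] and ω'(ξ) = γ δ^α ξ^{-α} for ξ > δ, where r ∈ (1,2), α ∈ (0,1), δ ∈ (0,1), and 0 < γ ≤ α. Then for all ξ ∈ (0, δ]: ∫_ξ^∞ ω(η)/η² dη ≤ log(δ/ξ) + 2. -/

import Mathlib

open Set Real MeasureTheory

theorem tail_integral_bound_near (r α δ γ : ℝ)
    (hr : 1 < r) (hr2 : r < 2) (hα0 : 0 < α) (hα1 : α < 1)
    (hδ0 : 0 < δ) (hδ1 : δ < 1)
    (hγ0 : 0 < γ) (hγα : γ ≤ α)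
    (ω : ℝ → ℝ)
    (hω1 : ∀ ξ ∈ Icc (0:ℝ) δ, ω ξ = ξ - ξ ^ r)
    (hω2 : ∀ ξ > δ, ω ξ = (δ - δ ^ r) + ∫ η in δ..ξ, γ * δ ^ α * η ^ (-α)) :
    ∀ ξ ∈ Ioc (0:ℝ) δ,
      (∫ η in Ioi ξ, ω η / η ^ 2) ≤ Real.log (δ / ξ) + 2 := by
  intro ξ hξ
  obtain ⟨hξ0, hξδ⟩ := hξ
  have h1α : (0:ℝ) < 1 - α := by linarith
  set c2 : ℝ := γ * δ ^ α / (1 - α) with hc2def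
  set c1 : ℝ := (δ - δ ^ r) - c2 * δ ^ (1 - α) with hc1def
  -- closed form of ω on (δ, ∞)
  have hωform : ∀ η ∈ Ioi δ, ω η = c1 + c2 * η ^ (1 - α) := by
    intro η hη
    rw [hω2 η hη]
    rw [intervalIntegral.integral_const_mul,
      integral_rpow (Or.inl (by linarith : (-1:ℝ) < -α))]
    have e : (-α + 1 : ℝ) = 1 - α := by ring
    rw [e, hc1def, hc2def]
    ring
  -- the function equals an explicit rpow combination on (δ, ∞)
  have hform2 : ∀ η ∈ Ioi δ, ω η / η ^ 2 = c1 * η ^ (-2:ℝ) + c2 * η ^ (-1 - α) := by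
    intro η hη
    have hη0 : (0:ℝ) < η := lt_trans hδ0 hη
    rw [hωform η hη]
    have h2 : η ^ (-2:ℝ) = (η ^ 2)⁻¹ := by
      rw [Real.rpow_neg hη0.le, show ((2:ℝ)) = ((2:ℕ):ℝ) by norm_num, Real.rpow_natCast]
    have h3 : η ^ (-1 - α : ℝ) = η ^ (1 - α) * (η ^ 2)⁻¹ := by
      rw [show (-1 - α : ℝ) = (1 - α) + (-2) by ring, Real.rpow_add hη0, h2]
    rw [h2, h3]
    ring
  -- integrability pieces on Ioi δ
  have hint1 : IntegrableOn (fun η : ℝ => c1 * η ^ (-2:ℝ)) (Ioi δ) := by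
    exact (integrableOn_Ioi_rpow_of_lt (by norm_num) hδ0).const_mul c1
  have hint2 : IntegrableOn (fun η : ℝ => c2 * η ^ (-1 - α)) (Ioi δ) := by
    exact (integrableOn_Ioi_rpow_of_lt (by linarith) hδ0).const_mul c2
  have hintg2 : IntegrableOn (fun η => ω η / η ^ 2) (Ioi δ) := by
    exact (IntegrableOn.congr_fun (hint1.add hint2) (fun x hx => (hform2 x hx).symm) measurableSet_Ioi)
  -- compute the tail integral
  have htail : (∫ η in Ioi δ, ω η / η ^ 2) = 1 - δ ^ (r - 1) + γ / α := by
    rw [setIntegral_congr_fun measurableSet_Ioi hform2]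
    rw [integral_add hint1 hint2, integral_const_mul, integral_const_mul,
      integral_Ioi_rpow_of_lt (by norm_num) hδ0,
      integral_Ioi_rpow_of_lt (by linarith) hδ0]
    have e1 : (-2 + 1 : ℝ) = -1 := by norm_num
    have e2 : (-1 - α + 1 : ℝ) = -α := by ring
    rw [e1, e2]
    have hd1 : δ ^ (-1:ℝ) = δ⁻¹ := Real.rpow_neg_one δ
    have eA : δ ^ α * δ ^ (1 - α) = δ := by
      rw [← Real.rpow_add hδ0]; norm_num
    have eB : δ ^ α * δ ^ (-α:ℝ) = 1 := by
      rw [← Real.rpow_add hδ0]; norm_num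
    have eC : δ ^ r * δ⁻¹ = δ ^ (r - 1) := by
      rw [← Real.rpow_neg_one δ, ← Real.rpow_add hδ0]; ring_nf
    rw [hc1def, hc2def, hd1]
    have hδne : δ ≠ 0 := ne_of_gt hδ0
    have eC' : δ ^ (r - 1) * δ = δ ^ r := by
      rw [← eC]; field_simp
    field_simp
    linear_combination (-(γ * (1 - α) * α ^ 2) - α * γ * (1 - α + α ^ 2)) * eA +
      (γ * (1 - α) * δ * α + δ * γ * (1 - α + α ^ 2)) * eB +
      (α ^ 2 * (1 - α) - α ^ 3 * (1 - α) + (α - 2 * α ^ 2 + 2 * α ^ 3 - α ^ 4)) * eC'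
  -- the Ioc part
  have hcont : ContinuousOn (fun η : ℝ => (η - η ^ r) / η ^ 2) (Icc ξ δ) := by
    apply ContinuousOn.div
    · exact continuousOn_id.sub (continuousOn_id.rpow_const
        (fun x hx => Or.inl (ne_of_gt (lt_of_lt_of_le hξ0 hx.1))))
    · exact continuousOn_id.pow 2
    · intro x hx; exact pow_ne_zero 2 (ne_of_gt (lt_of_lt_of_le hξ0 hx.1))
  have hg1int : IntegrableOn (fun η : ℝ => (η - η ^ r) / η ^ 2) (Ioc ξ δ) :=
    (hcont.integrableOn_Icc).mono_set Ioc_subset_Icc_self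
  have heqIoc : ∀ η ∈ Ioc ξ δ, ω η / η ^ 2 = (η - η ^ r) / η ^ 2 := by
    intro η hη
    rw [hω1 η ⟨le_of_lt (lt_trans hξ0 hη.1), hη.2⟩]
  have hintg1 : IntegrableOn (fun η => ω η / η ^ 2) (Ioc ξ δ) :=
    IntegrableOn.congr_fun hg1int (fun x hx => (heqIoc x hx).symm) measurableSet_Ioc
  have hsplit : (∫ η in Ioi ξ, ω η / η ^ 2) =
      (∫ η in Ioc ξ δ, ω η / η ^ 2) + (∫ η in Ioi δ, ω η / η ^ 2) := by
    rw [← setIntegral_union (Ioc_disjoint_Ioi le_rfl) measurableSet_Ioi hintg1 hintg2,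
      Ioc_union_Ioi_eq_Ioi hξδ]
  have hinvint : IntegrableOn (fun η : ℝ => η⁻¹) (Ioc ξ δ) := by
    refine (ContinuousOn.integrableOn_Icc ?_).mono_set Ioc_subset_Icc_self
    exact continuousOn_inv₀.mono (fun x hx => ne_of_gt (lt_of_lt_of_le hξ0 hx.1))
  have hmono : (∫ η in Ioc ξ δ, ω η / η ^ 2) ≤ ∫ η in Ioc ξ δ, η⁻¹ := by
    rw [setIntegral_congr_fun measurableSet_Ioc heqIoc]
    apply setIntegral_mono_on hg1int hinvint measurableSet_Ioc
    intro x hx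
    have hx0 : 0 < x := lt_of_lt_of_le hξ0 hx.1.le
    have hxr : 0 ≤ x ^ r := Real.rpow_nonneg hx0.le r
    rw [div_le_iff₀ (by positivity)]
    have hxx : x⁻¹ * x ^ 2 = x := by field_simp
    rw [hxx]
    linarith
  have hlogeq : (∫ η in Ioc ξ δ, (η:ℝ)⁻¹) = Real.log (δ / ξ) := by
    rw [← intervalIntegral.integral_of_le hξδ]
    exact integral_inv_of_pos hξ0 hδ0
  have hF : 0 < δ ^ (r - 1) := Real.rpow_pos_of_pos hδ0 _
  have hγα' : γ / α ≤ 1 := (div_le_one hα0).2 hγα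
  rw [hsplit, htail]
  have hIoc := hmono.trans_eq hlogeq
  linarith
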